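/- With K, (P_m), (Q_n), F, z₀ and E as in the context: for every (m,n) ∈ ℕ², the set {(s,t) ∈ ℝ₊² : E_{(s,t)} = F_{(m,n)}} contains a Lebesgue measurable set of positive measure; in fact it contains the set A = {(s,t) ∈ [m,m+1)×[n,n+1) : (m+1−s, n+1−t) ∈ (b,1)×(d,1)}. -/
import Mathlib


open MeasureTheory

noncomputable section

/-- The increasing family `F : ℤ² → P(K)` built from the mutually orthogonal projections
`(P_m)_{m ≥ 1}` and `(Q_n)_{n ≥ 1}`. -/
def Fproj {K : Type*} [NormedAddCommGroup K] [InnerProductSpace ℂ K] [CompleteSpace K]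
    (Pm Qn : ℕ → K →L[ℂ] K) : ℤ × ℤ → K →L[ℂ] K := fun q =>
  if 1 ≤ q.1 ∧ q.2 = 0 then ∑ k ∈ Finset.Icc 1 q.1.toNat, Pm k
  else if q.1 = 0 ∧ 1 ≤ q.2 then ∑ k ∈ Finset.Icc 1 q.2.toNat, Qn k
  else if 1 ≤ q.1 ∧ 1 ≤ q.2 then 1
  else 0

/-- The projection-valued map `E : ℝ₊² → P(K)` of the construction (extended by `0` off
`ℝ₊²`), where `e S = 1_S(z₀)` denotes the value of the fixed character `z₀` of
`L^∞([0,1]², λ)` on the indicator of `S`. -/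
def Eproj {K : Type*} [NormedAddCommGroup K] [InnerProductSpace ℂ K] [CompleteSpace K]
    (Pm Qn : ℕ → K →L[ℂ] K) (e : Set (ℝ × ℝ) → ℂ) : ℝ × ℝ → K →L[ℂ] K := fun q =>
  if 0 ≤ q.1 ∧ 0 ≤ q.2 then
    e (Set.Icc 0 ((⌊q.1⌋ : ℝ) + 1 - q.1) ×ˢ Set.Icc 0 ((⌊q.2⌋ : ℝ) + 1 - q.2)) •
        Fproj Pm Qn (⌊q.1⌋, ⌊q.2⌋) +
    e (Set.Icc 0 ((⌊q.1⌋ : ℝ) + 1 - q.1) ×ˢ Set.Icc ((⌊q.2⌋ : ℝ) + 1 - q.2) 1) •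
        Fproj Pm Qn (⌊q.1⌋, ⌊q.2⌋ + 1) +
    e (Set.Icc ((⌊q.1⌋ : ℝ) + 1 - q.1) 1 ×ˢ Set.Icc 0 ((⌊q.2⌋ : ℝ) + 1 - q.2)) •
        Fproj Pm Qn (⌊q.1⌋ + 1, ⌊q.2⌋) +
    e (Set.Icc ((⌊q.1⌋ : ℝ) + 1 - q.1) 1 ×ˢ Set.Icc ((⌊q.2⌋ : ℝ) + 1 - q.2) 1) •
        Fproj Pm Qn (⌊q.1⌋ + 1, ⌊q.2⌋ + 1)
  else 0

/-- For every `(m,n) ∈ ℕ²`, the set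
`{(s,t) ∈ ℝ₊² : E_{(s,t)} = F_{(m,n)}}` contains a Lebesgue measurable set of positive
measure; in fact it contains
`A = {(s,t) ∈ [m,m+1) × [n,n+1) : (m+1-s, n+1-t) ∈ (b,1) × (d,1)}`. -/
theorem Eproj_eq_Fproj_on_positive_measure_set
        {K : Type*} [NormedAddCommGroup K] [InnerProductSpace ℂ K] [CompleteSpace K]
    [SecondCountableTopology K]
    (Pm Qn : ℕ → K →L[ℂ] K)
    (hPP : ∀ i j, 1 ≤ i → 1 ≤ j → Pm i ∘L Pm j = if i = j then Pm i else 0)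
    (hQQ : ∀ i j, 1 ≤ i → 1 ≤ j → Qn i ∘L Qn j = if i = j then Qn i else 0)
    (hPsa : ∀ i, 1 ≤ i → IsSelfAdjoint (Pm i))
    (hQsa : ∀ i, 1 ≤ i → IsSelfAdjoint (Qn i))
    (a b c d : ℝ) (ha : a ∈ Set.Ioo (0 : ℝ) 1) (hb : b ∈ Set.Ioo (0 : ℝ) 1)
    (hc : c ∈ Set.Ioo (0 : ℝ) 1) (hd : d ∈ Set.Ioo (0 : ℝ) 1) (hab : a < b) (hcd : c < d)
    -- `e S = 1_S(z₀)` for a character `z₀` of `L^∞([0,1]², λ)`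
    (e : Set (ℝ × ℝ) → ℂ)
    (he01 : ∀ S : Set (ℝ × ℝ), e S = 0 ∨ e S = 1)
    (heuniv : e Set.univ = 1)
    (hemul : ∀ S T : Set (ℝ × ℝ), MeasurableSet S → MeasurableSet T →
      e (S ∩ T) = e S * e T)
    (headd : ∀ S T : Set (ℝ × ℝ), MeasurableSet S → MeasurableSet T →
      (volume.restrict (Set.Icc (0 : ℝ) 1 ×ˢ Set.Icc (0 : ℝ) 1)) (S ∩ T) = 0 →
      e (S ∪ T) = e S + e T)
    (henull : ∀ S : Set (ℝ × ℝ), MeasurableSet S →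
      (volume.restrict (Set.Icc (0 : ℝ) 1 ×ˢ Set.Icc (0 : ℝ) 1)) S = 0 → e S = 0)
    (hz₀ : e (Set.Icc a b ×ˢ Set.Icc c d) ≠ 0) :
    ∀ m n : ℕ,
      ({q : ℝ × ℝ | q.1 ∈ Set.Ico (m : ℝ) ((m : ℝ) + 1) ∧ q.2 ∈ Set.Ico (n : ℝ) ((n : ℝ) + 1) ∧
          ((m : ℝ) + 1 - q.1) ∈ Set.Ioo b 1 ∧ ((n : ℝ) + 1 - q.2) ∈ Set.Ioo d 1} ⊆
        {q : ℝ × ℝ | Eproj Pm Qn e q = Fproj Pm Qn ((m : ℤ), (n : ℤ))}) ∧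
      MeasurableSet {q : ℝ × ℝ | q.1 ∈ Set.Ico (m : ℝ) ((m : ℝ) + 1) ∧
          q.2 ∈ Set.Ico (n : ℝ) ((n : ℝ) + 1) ∧
          ((m : ℝ) + 1 - q.1) ∈ Set.Ioo b 1 ∧ ((n : ℝ) + 1 - q.2) ∈ Set.Ioo d 1} ∧
      0 < (volume : Measure (ℝ × ℝ))
        {q : ℝ × ℝ | q.1 ∈ Set.Ico (m : ℝ) ((m : ℝ) + 1) ∧
          q.2 ∈ Set.Ico (n : ℝ) ((n : ℝ) + 1) ∧
          ((m : ℝ) + 1 - q.1) ∈ Set.Ioo b 1 ∧ ((n : ℝ) + 1 - q.2) ∈ Set.Ioo d 1} := by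
  intro m n
  -- helper facts about e
  have hSmeas : MeasurableSet (Set.Icc a b ×ˢ Set.Icc c d) :=
    (measurableSet_Icc).prod measurableSet_Icc
  have heempty : e (∅ : Set (ℝ × ℝ)) = 0 :=
    henull ∅ MeasurableSet.empty (by simp)
  have key1 : ∀ T : Set (ℝ × ℝ), MeasurableSet T →
      (Set.Icc a b ×ˢ Set.Icc c d) ∩ T = Set.Icc a b ×ˢ Set.Icc c d → e T = 1 := by
    intro T hT hint
    rcases he01 T with h | h
    · exfalso
      apply hz₀
      have := hemul _ T hSmeas hT
      rw [hint, h, mul_zero] at this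
      exact this
    · exact h
  have key0 : ∀ T : Set (ℝ × ℝ), MeasurableSet T →
      (Set.Icc a b ×ˢ Set.Icc c d) ∩ T = ∅ → e T = 0 := by
    intro T hT hint
    have := hemul _ T hSmeas hT
    rw [hint, heempty] at this
    rcases mul_eq_zero.mp this.symm with h | h
    · exact absurd h hz₀
    · exact h
  refine ⟨?_, ?_, ?_⟩
  · rintro ⟨s, t⟩ ⟨hs, ht, hu, hv⟩
    simp only [Set.mem_Ico, Set.mem_Ioo] at hs ht hu hv
    simp only [Set.mem_setOf_eq]
    have hfs : ⌊s⌋ = (m : ℤ) := by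
      rw [Int.floor_eq_iff]
      constructor <;> push_cast <;> [exact hs.1; exact hs.2]
    have hft : ⌊t⌋ = (n : ℤ) := by
      rw [Int.floor_eq_iff]
      constructor <;> push_cast <;> [exact ht.1; exact ht.2]
    have h0s : (0 : ℝ) ≤ s := le_trans (by positivity) hs.1
    have h0t : (0 : ℝ) ≤ t := le_trans (by positivity) ht.1
    rw [Eproj]
    rw [if_pos ⟨h0s, h0t⟩, hfs, hft]
    push_cast
    have e1 : e (Set.Icc 0 ((m : ℝ) + 1 - s) ×ˢ Set.Icc 0 ((n : ℝ) + 1 - t)) = 1 := by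
      apply key1 _ (measurableSet_Icc.prod measurableSet_Icc)
      rw [Set.inter_eq_left]
      apply Set.prod_mono
      · exact Set.Icc_subset_Icc (le_of_lt ha.1) (le_of_lt hu.1)
      · exact Set.Icc_subset_Icc (le_of_lt hc.1) (le_of_lt hv.1)
    have e2 : e (Set.Icc 0 ((m : ℝ) + 1 - s) ×ˢ Set.Icc ((n : ℝ) + 1 - t) 1) = 0 := by
      apply key0 _ (measurableSet_Icc.prod measurableSet_Icc)
      ext ⟨x, y⟩
      simp only [Set.mem_inter_iff, Set.mem_prod, Set.mem_Icc, Set.mem_empty_iff_false,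
        iff_false, not_and]
      intro h1 h2 h3
      linarith [h1.2.2, hv.1]
    have e3 : e (Set.Icc ((m : ℝ) + 1 - s) 1 ×ˢ Set.Icc 0 ((n : ℝ) + 1 - t)) = 0 := by
      apply key0 _ (measurableSet_Icc.prod measurableSet_Icc)
      ext ⟨x, y⟩
      simp only [Set.mem_inter_iff, Set.mem_prod, Set.mem_Icc, Set.mem_empty_iff_false,
        iff_false, not_and]
      intro h1 h2 h3
      linarith [h1.2.1, hu.1]
    have e4 : e (Set.Icc ((m : ℝ) + 1 - s) 1 ×ˢ Set.Icc ((n : ℝ) + 1 - t) 1) = 0 := by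
      apply key0 _ (measurableSet_Icc.prod measurableSet_Icc)
      ext ⟨x, y⟩
      simp only [Set.mem_inter_iff, Set.mem_prod, Set.mem_Icc, Set.mem_empty_iff_false,
        iff_false, not_and]
      intro h1 h2 h3
      linarith [h1.2.1, hu.1]
    rw [e1, e2, e3, e4]
    simp
  · have hA : {q : ℝ × ℝ | q.1 ∈ Set.Ico (m : ℝ) ((m : ℝ) + 1) ∧
        q.2 ∈ Set.Ico (n : ℝ) ((n : ℝ) + 1) ∧
        ((m : ℝ) + 1 - q.1) ∈ Set.Ioo b 1 ∧ ((n : ℝ) + 1 - q.2) ∈ Set.Ioo d 1} =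
        Set.Ioo (m : ℝ) ((m : ℝ) + 1 - b) ×ˢ Set.Ioo (n : ℝ) ((n : ℝ) + 1 - d) := by
      ext ⟨s, t⟩
      simp only [Set.mem_setOf_eq, Set.mem_Ico, Set.mem_Ioo, Set.mem_prod]
      constructor
      · rintro ⟨hs, ht, hu, hv⟩
        exact ⟨⟨by linarith [hu.2], by linarith [hu.1]⟩,
               ⟨by linarith [hv.2], by linarith [hv.1]⟩⟩
      · rintro ⟨hs, ht⟩
        refine ⟨⟨le_of_lt hs.1, by linarith [hs.2, hb.1]⟩,
                ⟨le_of_lt ht.1, by linarith [ht.2, hd.1]⟩,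
                ⟨by linarith [hs.2], by linarith [hs.1]⟩,
                ⟨by linarith [ht.2], by linarith [ht.1]⟩⟩
    rw [hA]
    exact measurableSet_Ioo.prod measurableSet_Ioo
  · have hA : {q : ℝ × ℝ | q.1 ∈ Set.Ico (m : ℝ) ((m : ℝ) + 1) ∧
        q.2 ∈ Set.Ico (n : ℝ) ((n : ℝ) + 1) ∧
        ((m : ℝ) + 1 - q.1) ∈ Set.Ioo b 1 ∧ ((n : ℝ) + 1 - q.2) ∈ Set.Ioo d 1} =
        Set.Ioo (m : ℝ) ((m : ℝ) + 1 - b) ×ˢ Set.Ioo (n : ℝ) ((n : ℝ) + 1 - d) := by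
      ext ⟨s, t⟩
      simp only [Set.mem_setOf_eq, Set.mem_Ico, Set.mem_Ioo, Set.mem_prod]
      constructor
      · rintro ⟨hs, ht, hu, hv⟩
        exact ⟨⟨by linarith [hu.2], by linarith [hu.1]⟩,
               ⟨by linarith [hv.2], by linarith [hv.1]⟩⟩
      · rintro ⟨hs, ht⟩
        refine ⟨⟨le_of_lt hs.1, by linarith [hs.2, hb.1]⟩,
                ⟨le_of_lt ht.1, by linarith [ht.2, hd.1]⟩,
                ⟨by linarith [hs.2], by linarith [hs.1]⟩,
                ⟨by linarith [ht.2], by linarith [ht.1]⟩⟩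
    rw [hA, Measure.volume_eq_prod, Measure.prod_prod, Real.volume_Ioo, Real.volume_Ioo]
    apply ENNReal.mul_pos
    · exact ne_of_gt (ENNReal.ofReal_pos.mpr (by linarith [hb.2]))
    · exact ne_of_gt (ENNReal.ofReal_pos.mpr (by linarith [hd.2]))
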